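/- Let k ≥ 0 and d = 4k+2. For the n-dimensional cube R = [0,d]^n in ℤ^n, there is a proper edge (2n+1)-coloring of the edges in R and adjacent to R such that: (1) for each i, all edges adjacent to R parallel to e_i have the same color c_i, and (2) the (2n+1)-st color is used only on edges of the core K = [d/2 - 1, d/2 + 1]^n of R. -/

import Mathlib

/-- An edge of the grid graph on ℤ^n, recorded as its left endpoint together with the
direction `i`; the edge joins `e.1` and `e.1 + e_i`. -/
abbrev GridEdge (n : ℕ) := (Fin n → ℤ) × Fin n

/-- The right endpoint `e.1 + e_i` of a grid edge. -/
def rightEnd {n : ℕ} (e : GridEdge n) : Fin n → ℤ := e.1 + Pi.single e.2 1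

/-- Two grid edges share a vertex. -/
def sharesVertex {n : ℕ} (e f : GridEdge n) : Prop :=
  e.1 = f.1 ∨ e.1 = rightEnd f ∨ rightEnd e = f.1 ∨ rightEnd e = rightEnd f

/-- `x` is a vertex of the rectangle `[b_1, b_1+a_1] × ⋯ × [b_n, b_n+a_n]`. -/
def inRect {n : ℕ} (b : Fin n → ℤ) (a : Fin n → ℕ) (x : Fin n → ℤ) : Prop :=
  ∀ i, b i ≤ x i ∧ x i ≤ b i + (a i : ℤ)

/-- The grid edge `e` lies in the rectangle: both endpoints are in it. -/
def edgeIn {n : ℕ} (b : Fin n → ℤ) (a : Fin n → ℕ) (e : GridEdge n) : Prop :=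
  inRect b a e.1 ∧ inRect b a (rightEnd e)

/-- The grid edge `e` is adjacent to the rectangle: not in it, but shares a vertex with it. -/
def edgeAdj {n : ℕ} (b : Fin n → ℤ) (a : Fin n → ℕ) (e : GridEdge n) : Prop :=
  ¬ edgeIn b a e ∧ (inRect b a e.1 ∨ inRect b a (rightEnd e))

namespace CubeColoring

variable {n : ℕ}

/-- parity bit of an integer, as a natural number in `{0,1}`. -/
def bit (v : ℤ) : ℕ := (v % 2).toNat

lemma bit_lt (v : ℤ) : bit v < 2 := by unfold bit; omega

lemma bit_succ_ne (v : ℤ) : bit v ≠ bit (v + 1) := by unfold bit; omega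

/-- base of the value-pair containing `v` (integer version). -/
def bvZ (k : ℕ) (v : ℤ) : ℤ := if v ≤ 2*(k:ℤ)+1 then v - v % 2 else v - (v+1) % 2

/-- base of the value-pair containing `v`; `⊤` for the unpaired value `2k+2`. -/
def bvW (k : ℕ) (v : ℤ) : WithTop ℤ :=
  if v = 2*(k:ℤ)+2 then ⊤ else ((bvZ k v : ℤ) : WithTop ℤ)

lemma bvW_eq_top {k : ℕ} {v : ℤ} (h : bvW k v = ⊤) : v = 2*(k:ℤ)+2 := by
  unfold bvW at h
  by_cases hv : v = 2*(k:ℤ)+2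
  · exact hv
  · rw [if_neg hv] at h; exact absurd h (by simp)

lemma bv_spec {k : ℕ} {v q : ℤ} (h0 : 0 ≤ v) (h1 : v ≤ 4*(k:ℤ)+2)
    (hq : bvW k v = (q : WithTop ℤ)) :
    0 ≤ q ∧ q + 1 ≤ 4*(k:ℤ)+2 ∧ (v = q ∨ v = q + 1) ∧
      bvW k q = (q : WithTop ℤ) ∧ bvW k (q+1) = (q : WithTop ℤ) := by
  unfold bvW at hq
  by_cases hv : v = 2*(k:ℤ)+2
  · rw [if_pos hv] at hq; exact absurd hq (by simp)
  rw [if_neg hv] at hq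
  have hbz : bvZ k v = q := by exact_mod_cast hq
  have key : 0 ≤ q ∧ q + 1 ≤ 4*(k:ℤ)+2 ∧ (v = q ∨ v = q+1) ∧ q ≠ 2*(k:ℤ)+2 ∧
      q+1 ≠ 2*(k:ℤ)+2 ∧ bvZ k q = q ∧ bvZ k (q+1) = q := by
    unfold bvZ at hbz ⊢
    split_ifs at hbz ⊢ <;> omega
  refine ⟨key.1, key.2.1, key.2.2.1, ?_, ?_⟩
  · unfold bvW; rw [if_neg key.2.2.2.1]; exact_mod_cast key.2.2.2.2.2.1
  · unfold bvW; rw [if_neg key.2.2.2.2.1]; exact_mod_cast key.2.2.2.2.2.2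

/-- the defect position datum of the line through `x` in direction `i`. -/
def qm (k : ℕ) (x : Fin n → ℤ) (i : Fin n) : WithTop ℤ :=
  (Finset.univ.erase i).inf fun j => bvW k (x j)

/-- the actual defect position. -/
def pos (k : ℕ) (x : Fin n → ℤ) (i : Fin n) : ℤ := (qm k x i).untopD (2*(k:ℤ))

lemma qm_le {k : ℕ} {x : Fin n → ℤ} {i l : Fin n} (h : l ≠ i) :
    qm k x i ≤ bvW k (x l) :=
  Finset.inf_le (by simp [Finset.mem_erase, h])

lemma qm_congr {k : ℕ} {x y : Fin n → ℤ} {i : Fin n} (h : ∀ l, l ≠ i → x l = y l) :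
    qm k x i = qm k y i := by
  unfold qm
  exact Finset.inf_congr rfl fun l hl => by rw [h l (Finset.mem_erase.mp hl).1]

lemma qm_attain {k : ℕ} {x : Fin n → ℤ} {i : Fin n} (hq : qm k x i ≠ ⊤) :
    ∃ j, j ≠ i ∧ bvW k (x j) = qm k x i := by
  have hne : (Finset.univ.erase i).Nonempty := by
    by_contra h
    rw [Finset.not_nonempty_iff_eq_empty] at h
    unfold qm at hq
    rw [h, Finset.inf_empty] at hq
    exact hq rfl
  obtain ⟨j, hj, heq⟩ := Finset.exists_mem_eq_inf (Finset.univ.erase i) hne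
      (fun j => bvW k (x j))
  exact ⟨j, (Finset.mem_erase.mp hj).1, heq.symm⟩

lemma star_coords {k : ℕ} {x : Fin n → ℤ} {i : Fin n} (hq : qm k x i = ⊤) :
    ∀ l, l ≠ i → x l = 2*(k:ℤ)+2 := by
  intro l hl
  exact bvW_eq_top (top_le_iff.mp (hq ▸ qm_le hl))

lemma p_spec {k : ℕ} {x : Fin n → ℤ} {i : Fin n} {q : ℤ}
    (hq : qm k x i = (q : WithTop ℤ))
    (hb : ∀ l, l ≠ i → 0 ≤ x l ∧ x l ≤ 4*(k:ℤ)+2) :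
    0 ≤ q ∧ q+1 ≤ 4*(k:ℤ)+2 ∧ bvW k q = (q : WithTop ℤ) ∧
      bvW k (q+1) = (q : WithTop ℤ) := by
  obtain ⟨j, hji, hbv⟩ := qm_attain (by rw [hq]; exact WithTop.coe_ne_top)
  rw [hq] at hbv
  obtain ⟨h1, h2, _, h4, h5⟩ := bv_spec (hb j hji).1 (hb j hji).2 hbv
  exact ⟨h1, h2, h4, h5⟩

/-- step `s` forward from `i`, cyclically. -/
def fish (i : Fin n) (s : ℕ) : Fin n := ⟨(i.val + s) % n, Nat.mod_lt _ i.pos⟩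

lemma mod_two_cases {m N : ℕ} (h : m < 2*N) : m % N = m ∨ (N ≤ m ∧ m % N = m - N) := by
  rcases Nat.lt_or_ge m N with h' | h'
  · exact Or.inl (Nat.mod_eq_of_lt h')
  · refine Or.inr ⟨h', ?_⟩
    rw [Nat.mod_eq_sub_mod h']
    exact Nat.mod_eq_of_lt (by omega)

lemma fish_ne {i : Fin n} {s : ℕ} (h0 : 0 < s) (h1 : s < n) : fish i s ≠ i := by
  intro h
  have hv : (i.val + s) % n = i.val := congrArg Fin.val h
  have hi := i.isLt
  have := mod_two_cases (N := n) (m := i.val + s) (by omega)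
  omega

lemma fish_eq {i j : Fin n} (hne : j ≠ i) :
    ∃ s, 0 < s ∧ s < n ∧ fish i s = j := by
  have hi := i.isLt
  have hj := j.isLt
  have hv : j.val ≠ i.val := fun h => hne (Fin.ext h)
  rcases Nat.lt_or_ge i.val j.val with h | h
  · refine ⟨j.val - i.val, by omega, by omega, Fin.ext ?_⟩
    show (i.val + (j.val - i.val)) % n = j.val
    rw [show i.val + (j.val - i.val) = j.val by omega]
    exact Nat.mod_eq_of_lt hj
  · refine ⟨j.val + n - i.val, by omega, by omega, Fin.ext ?_⟩
    show (i.val + (j.val + n - i.val)) % n = j.val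
    rw [show i.val + (j.val + n - i.val) = j.val + n by omega, Nat.add_mod_right]
    exact Nat.mod_eq_of_lt hj

lemma find_congr' {p q : ℕ → Prop} [DecidablePred p] [DecidablePred q]
    (h : ∀ m, p m ↔ q m) (hp : ∃ m, p m) (hq : ∃ m, q m) :
    Nat.find hp = Nat.find hq :=
  le_antisymm (Nat.find_min' hp ((h _).mpr (Nat.find_spec hq)))
    (Nat.find_min' hq ((h _).mp (Nat.find_spec hp)))

lemma fish_next_aux (g : Fin n → Prop) [DecidablePred g] {i j : Fin n}
    (hgj : g j) (hij : i ≠ j)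
    (hi : ∃ s, 0 < s ∧ s < n ∧ g (fish i s)) (hj : ∃ s, 0 < s ∧ s < n ∧ g (fish j s))
    (hlt : Nat.find hj < Nat.find hi)
    (heq : fish i (Nat.find hi) = fish j (Nat.find hj)) : False := by
  obtain ⟨ha0, han, hga⟩ := Nat.find_spec hi
  obtain ⟨hb0, hbn, hgb⟩ := Nat.find_spec hj
  set a := Nat.find hi with hadef
  set b := Nat.find hj with hbdef
  have hval : (i.val + a) % n = (j.val + b) % n := congrArg Fin.val heq
  have hi' := i.isLt
  have hj' := j.isLt
  have hia := mod_two_cases (N := n) (m := i.val + a) (by omega)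
  have hjb := mod_two_cases (N := n) (m := j.val + b) (by omega)
  have hE : i.val + a = j.val + b ∨ i.val + a = j.val + b + n := by omega
  have hm : fish i (a - b) = j := by
    refine Fin.ext ?_
    show (i.val + (a - b)) % n = j.val
    rcases hE with h | h
    · rw [show i.val + (a-b) = j.val by omega]
      exact Nat.mod_eq_of_lt hj'
    · rw [show i.val + (a-b) = j.val + n by omega, Nat.add_mod_right]
      exact Nat.mod_eq_of_lt hj'
  exact Nat.find_min hi (show a - b < a by omega)
    ⟨by omega, by omega, by rw [hm]; exact hgj⟩

lemma fish_next_inj (g : Fin n → Prop) [DecidablePred g] {i j : Fin n}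
    (hgi : g i) (hgj : g j) (hij : i ≠ j)
    (hi : ∃ s, 0 < s ∧ s < n ∧ g (fish i s)) (hj : ∃ s, 0 < s ∧ s < n ∧ g (fish j s)) :
    fish i (Nat.find hi) ≠ fish j (Nat.find hj) := by
  intro heq
  rcases lt_trichotomy (Nat.find hi) (Nat.find hj) with h | h | h
  · exact fish_next_aux g hgi hij.symm hj hi h heq.symm
  · obtain ⟨ha0, han, _⟩ := Nat.find_spec hi
    obtain ⟨hb0, hbn, _⟩ := Nat.find_spec hj
    have hval : (i.val + Nat.find hi) % n = (j.val + Nat.find hj) % n :=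
      congrArg Fin.val heq
    have hi' := i.isLt
    have hj' := j.isLt
    have h1 := mod_two_cases (N := n) (m := i.val + Nat.find hi) (by omega)
    have h2 := mod_two_cases (N := n) (m := j.val + Nat.find hj) (by omega)
    exact hij (Fin.ext (by omega))
  · exact fish_next_aux g hgj hij hi hj h heq

open Classical in
/-- shift to the host direction. -/
noncomputable def hshift (k : ℕ) (x : Fin n → ℤ) (i : Fin n) : ℕ :=
  if h : ∃ s, 0 < s ∧ s < n ∧ bvW k (x (fish i s)) = qm k x i then Nat.find h else 0

/-- the host direction of the line through `x` in direction `i`. -/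
noncomputable def host (k : ℕ) (x : Fin n → ℤ) (i : Fin n) : Fin n := fish i (hshift k x i)

lemma host_ex {k : ℕ} {x : Fin n → ℤ} {i : Fin n} (hq : qm k x i ≠ ⊤) :
    ∃ s, 0 < s ∧ s < n ∧ bvW k (x (fish i s)) = qm k x i := by
  obtain ⟨j, hji, hbv⟩ := qm_attain hq
  obtain ⟨s, h0, h1, hf⟩ := fish_eq hji
  exact ⟨s, h0, h1, by rw [hf]; exact hbv⟩

lemma host_spec {k : ℕ} {x : Fin n → ℤ} {i : Fin n} (hq : qm k x i ≠ ⊤) :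
    host k x i ≠ i ∧ bvW k (x (host k x i)) = qm k x i := by
  have hex := host_ex hq
  unfold host hshift
  rw [dif_pos hex]
  obtain ⟨h0, h1, h2⟩ := Nat.find_spec hex
  exact ⟨fish_ne h0 h1, h2⟩

/-- the defect color. -/
noncomputable def defCol (k : ℕ) (x : Fin n → ℤ) (i : Fin n) : ℕ :=
  if qm k x i = ⊤ then 2*n
  else 2*(host k x i).val + bit (x (host k x i) + 1)

/-- the coloring. -/
noncomputable def cRaw (k : ℕ) (e : GridEdge n) : ℕ :=
  if e.1 e.2 = pos k e.1 e.2 then defCol k e.1 e.2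
  else 2*e.2.val + bit (if e.1 e.2 < pos k e.1 e.2 then e.1 e.2 + 1 else e.1 e.2)

/-- `Pi.single` as an integer vector. -/
def sing (i : Fin n) : Fin n → ℤ := Pi.single i 1

lemma defCol_ne_own (k : ℕ) (x : Fin n → ℤ) (i : Fin n) (b : ℕ) (hb : b < 2) :
    defCol k x i ≠ 2*i.val + b := by
  unfold defCol
  split_ifs with hq
  · have := i.isLt; omega
  · obtain ⟨hne, _⟩ := host_spec hq
    have h1 := (host k x i).isLt
    have h2 : (host k x i).val ≠ i.val := fun h => hne (Fin.ext h)
    have := bit_lt (x (host k x i) + 1)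
    omega

lemma add_single (x : Fin n → ℤ) (i l : Fin n) :
    (x + sing i) l = x l + if l = i then 1 else 0 := by
  unfold sing
  simp [Pi.single_apply]

lemma vert_off {x v : Fin n → ℤ} {i : Fin n}
    (hv : v = x ∨ v = x + sing i) : ∀ l, l ≠ i → v l = x l := by
  intro l hl
  rcases hv with rfl | rfl
  · rfl
  · rw [add_single, if_neg hl, add_zero]

lemma vert_i {x v : Fin n → ℤ} {i : Fin n}
    (hv : v = x ∨ v = x + sing i) : v i = x i ∨ v i = x i + 1 := by
  rcases hv with rfl | rfl
  · exact Or.inl rfl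
  · right; rw [add_single, if_pos rfl]

lemma qm_host_line {k : ℕ} {z v : Fin n → ℤ} {j : Fin n} {q : ℤ}
    (hq : qm k z j = (q : WithTop ℤ)) (hzj : z j = q)
    (hbq : bvW k q = (q : WithTop ℤ)) (hbq1 : bvW k (q+1) = (q : WithTop ℤ))
    (hv : v = z ∨ v = z + sing j) {i : Fin n} (hij : i ≠ j) :
    qm k v i = (q : WithTop ℤ) := by
  have hvj : bvW k (v j) = (q : WithTop ℤ) := by
    rcases vert_i hv with h | h
    · rw [h, hzj]; exact hbq
    · rw [h, hzj]; exact hbq1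
  apply le_antisymm
  · calc qm k v i ≤ bvW k (v j) := qm_le (Ne.symm hij)
      _ = _ := hvj
  · apply Finset.le_inf
    intro l hl
    have hli : l ≠ i := (Finset.mem_erase.mp hl).1
    by_cases hlj : l = j
    · subst hlj; rw [hvj]
    · rw [vert_off hv l hlj]
      calc (q : WithTop ℤ) = qm k z j := hq.symm
        _ ≤ bvW k (z l) := qm_le hlj

lemma sameNe (k : ℕ) (x : Fin n → ℤ) (i : Fin n) :
    cRaw k ((x, i) : GridEdge n) ≠ cRaw k ((x + sing i, i) : GridEdge n) := by
  have hoff : ∀ l, l ≠ i → (x + sing i) l = x l := by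
    intro l hl; rw [add_single, if_neg hl, add_zero]
  have hqm : qm k (x + sing i) i = qm k x i :=
    (qm_congr fun l hl => (hoff l hl).symm).symm
  have hzi : (x + sing i) i = x i + 1 := by rw [add_single, if_pos rfl]
  have hpos : pos k (x + sing i) i = pos k x i := by unfold pos; rw [hqm]
  simp only [cRaw]
  rw [hpos, hzi]
  by_cases h1 : x i = pos k x i
  · rw [if_pos h1, if_neg (by omega)]
    rw [if_neg (show ¬ x i + 1 < pos k x i by omega)]
    exact defCol_ne_own k x i _ (bit_lt _)
  · by_cases h2 : x i + 1 = pos k x i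
    · rw [if_neg h1, if_pos h2]
      rw [if_pos (by omega)]
      exact (defCol_ne_own k (x + sing i) i _ (bit_lt _)).symm
    · rw [if_neg h1, if_neg h2]
      by_cases h3 : x i < pos k x i
      · rw [if_pos h3, if_pos (by omega)]
        have := bit_succ_ne (x i + 1)
        omega
      · rw [if_neg h3, if_neg (by omega)]
        have := bit_succ_ne (x i)
        omega

lemma bd (k : ℕ) (x z : Fin n → ℤ) (i j : Fin n) (hij : i ≠ j)
    (hzb : ∀ l, l ≠ j → 0 ≤ z l ∧ z l ≤ 4*(k:ℤ)+2)
    (v : Fin n → ℤ)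
    (hvx : v = x ∨ v = x + sing i) (hvz : v = z ∨ v = z + sing j)
    (hde : x i ≠ pos k x i) (hdf : z j = pos k z j) :
    cRaw k ((x, i) : GridEdge n) ≠ cRaw k ((z, j) : GridEdge n) := by
  simp only [cRaw]
  rw [if_neg hde, if_pos hdf]
  unfold defCol
  by_cases hq : qm k z j = ⊤
  · rw [if_pos hq]
    have := i.isLt
    have := bit_lt (if x i < pos k x i then x i + 1 else x i)
    omega
  rw [if_neg hq]
  obtain ⟨hne, hbv⟩ := host_spec hq
  by_cases hhi : host k z j = i
  · rw [hhi] at hbv ⊢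
    obtain ⟨q, hq'⟩ := WithTop.ne_top_iff_exists.mp hq
    have hqe : qm k z j = (q : WithTop ℤ) := hq'.symm
    have hposf : pos k z j = q := by unfold pos; rw [hqe, WithTop.untopD_coe]
    obtain ⟨hq0, hq1, hbq, hbq1⟩ := p_spec hqe hzb
    have hzib := hzb i hij
    rw [hqe] at hbv
    obtain ⟨_, _, hmem, _, _⟩ := bv_spec hzib.1 hzib.2 hbv
    have hqmv : qm k v i = (q : WithTop ℤ) :=
      qm_host_line hqe (by rw [hdf, hposf]) hbq hbq1 hvz hij
    have hqme : qm k x i = (q : WithTop ℤ) := by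
      rw [qm_congr fun l hl => (vert_off hvx l hl).symm]
      exact hqmv
    have hpose : pos k x i = q := by unfold pos; rw [hqme, WithTop.untopD_coe]
    have hvi : v i = z i := vert_off hvz i hij
    have hxi : v i = x i ∨ v i = x i + 1 := vert_i hvx
    rw [hpose] at hde ⊢
    have hbne := bit_succ_ne (z i)
    rcases hmem with hz1 | hz1 <;> rcases hxi with hx1 | hx1
    · exfalso; omega
    · have hA : (if x i < q then x i + 1 else x i) = z i := by
        rw [if_pos (by omega)]; omega
      rw [hA]; omega
    · have hA : (if x i < q then x i + 1 else x i) = z i := by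
        rw [if_neg (by omega)]; omega
      rw [hA]; omega
    · exfalso; omega
  · have h1 := (host k z j).isLt
    have h2 : (host k z j).val ≠ i.val := fun h => hhi (Fin.ext h)
    have := bit_lt (z (host k z j) + 1)
    have := bit_lt (if x i < pos k x i then x i + 1 else x i)
    omega

lemma dd (k : ℕ) (x z : Fin n → ℤ) (i j : Fin n) (hij : i ≠ j)
    (hxb : ∀ l, l ≠ i → 0 ≤ x l ∧ x l ≤ 4*(k:ℤ)+2)
    (hzb : ∀ l, l ≠ j → 0 ≤ z l ∧ z l ≤ 4*(k:ℤ)+2)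
    (v : Fin n → ℤ)
    (hvx : v = x ∨ v = x + sing i) (hvz : v = z ∨ v = z + sing j)
    (hde : x i = pos k x i) (hdf : z j = pos k z j) :
    cRaw k ((x, i) : GridEdge n) ≠ cRaw k ((z, j) : GridEdge n) := by
  simp only [cRaw]
  rw [if_pos hde, if_pos hdf]
  unfold defCol
  by_cases hqe : qm k x i = ⊤ <;> by_cases hqf : qm k z j = ⊤
  · exfalso
    have hxj : x j = 2*(k:ℤ)+2 := star_coords hqe j (Ne.symm hij)
    have hvj1 : v j = x j := vert_off hvx j (Ne.symm hij)
    have hvj2 : v j = z j ∨ v j = z j + 1 := vert_i hvz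
    have hzj : z j = 2*(k:ℤ) := by
      rw [hdf]; unfold pos; rw [hqf, WithTop.untopD_top]
    omega
  · rw [if_pos hqe, if_neg hqf]
    obtain ⟨hne, _⟩ := host_spec hqf
    have := (host k z j).isLt
    have := bit_lt (z (host k z j) + 1)
    omega
  · rw [if_neg hqe, if_pos hqf]
    obtain ⟨hne, _⟩ := host_spec hqe
    have := (host k x i).isLt
    have := bit_lt (x (host k x i) + 1)
    omega
  · rw [if_neg hqe, if_neg hqf]
    by_cases hhh : host k x i = host k z j
    · exfalso
      obtain ⟨qe, hqe'⟩ := WithTop.ne_top_iff_exists.mp hqe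
      obtain ⟨qf, hqf'⟩ := WithTop.ne_top_iff_exists.mp hqf
      have hqeE : qm k x i = (qe : WithTop ℤ) := hqe'.symm
      have hqfE : qm k z j = (qf : WithTop ℤ) := hqf'.symm
      obtain ⟨he0, he1, hbe, hbe1⟩ := p_spec hqeE hxb
      obtain ⟨hf0, hf1, hbf, hbf1⟩ := p_spec hqfE hzb
      have hxi : x i = qe := by rw [hde]; unfold pos; rw [hqeE, WithTop.untopD_coe]
      have hzj : z j = qf := by rw [hdf]; unfold pos; rw [hqfE, WithTop.untopD_coe]
      have hvie : bvW k (v i) = (qe : WithTop ℤ) := by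
        rcases vert_i hvx with h | h
        · rw [h, hxi]; exact hbe
        · rw [h, hxi]; exact hbe1
      have hvjf : bvW k (v j) = (qf : WithTop ℤ) := by
        rcases vert_i hvz with h | h
        · rw [h, hzj]; exact hbf
        · rw [h, hzj]; exact hbf1
      have hle1 : (qe : WithTop ℤ) ≤ (qf : WithTop ℤ) := by
        have h := qm_le (k := k) (x := x) (Ne.symm hij)
        rw [hqeE, show x j = v j from (vert_off hvx j (Ne.symm hij)).symm, hvjf] at h
        exact h
      have hle2 : (qf : WithTop ℤ) ≤ (qe : WithTop ℤ) := by
        have h := qm_le (k := k) (x := z) hij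
        rw [hqfE] at h
        rw [show z i = v i from (vert_off hvz i hij).symm] at h
        rw [hvie] at h
        exact h
      have hqq : qe = qf := by exact_mod_cast le_antisymm hle1 hle2
      subst hqq
      have hQi : ∃ s, 0 < s ∧ s < n ∧ bvW k (v (fish i s)) = (qe : WithTop ℤ) := by
        obtain ⟨s, h0, h1, h2⟩ := host_ex (by rw [hqeE]; exact WithTop.coe_ne_top)
        refine ⟨s, h0, h1, ?_⟩
        rw [vert_off hvx _ (fish_ne h0 h1), h2, hqeE]
      have hQj : ∃ s, 0 < s ∧ s < n ∧ bvW k (v (fish j s)) = (qe : WithTop ℤ) := by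
        obtain ⟨s, h0, h1, h2⟩ := host_ex (by rw [hqfE]; exact WithTop.coe_ne_top)
        refine ⟨s, h0, h1, ?_⟩
        rw [vert_off hvz _ (fish_ne h0 h1), h2, hqfE]
      have hhe : host k x i = fish i (Nat.find hQi) := by
        have hex := host_ex (x := x) (i := i) (by rw [hqeE]; exact WithTop.coe_ne_top)
        unfold host hshift
        rw [dif_pos hex]
        congr 1
        refine find_congr' (fun m => ?_) hex hQi
        constructor
        · rintro ⟨h0, h1, h2⟩
          refine ⟨h0, h1, ?_⟩
          rw [vert_off hvx _ (fish_ne h0 h1), h2, hqeE]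
        · rintro ⟨h0, h1, h2⟩
          refine ⟨h0, h1, ?_⟩
          rw [vert_off hvx _ (fish_ne h0 h1)] at h2
          rw [h2, hqeE]
      have hhf : host k z j = fish j (Nat.find hQj) := by
        have hex := host_ex (x := z) (i := j) (by rw [hqfE]; exact WithTop.coe_ne_top)
        unfold host hshift
        rw [dif_pos hex]
        congr 1
        refine find_congr' (fun m => ?_) hex hQj
        constructor
        · rintro ⟨h0, h1, h2⟩
          refine ⟨h0, h1, ?_⟩
          rw [vert_off hvz _ (fish_ne h0 h1), h2, hqfE]
        · rintro ⟨h0, h1, h2⟩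
          refine ⟨h0, h1, ?_⟩
          rw [vert_off hvz _ (fish_ne h0 h1)] at h2
          rw [h2, hqfE]
      exact fish_next_inj (fun l => bvW k (v l) = (qe : WithTop ℤ))
        hvie hvjf hij hQi hQj (by rw [← hhe, ← hhf, hhh])
    · have h1 := (host k x i).isLt
      have h2 := (host k z j).isLt
      have h3 : (host k x i).val ≠ (host k z j).val := fun h => hhh (Fin.ext h)
      have := bit_lt (x (host k x i) + 1)
      have := bit_lt (z (host k z j) + 1)
      omega

lemma crossNe (k : ℕ) (x z : Fin n → ℤ) (i j : Fin n) (hij : i ≠ j)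
    (hxb : ∀ l, l ≠ i → 0 ≤ x l ∧ x l ≤ 4*(k:ℤ)+2)
    (hzb : ∀ l, l ≠ j → 0 ≤ z l ∧ z l ≤ 4*(k:ℤ)+2)
    (v : Fin n → ℤ)
    (hvx : v = x ∨ v = x + sing i) (hvz : v = z ∨ v = z + sing j) :
    cRaw k ((x, i) : GridEdge n) ≠ cRaw k ((z, j) : GridEdge n) := by
  by_cases hde : x i = pos k x i <;> by_cases hdf : z j = pos k z j
  · exact dd k x z i j hij hxb hzb v hvx hvz hde hdf
  · exact (bd k z x j i (Ne.symm hij) hxb v hvz hvx hdf hde).symm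
  · exact bd k x z i j hij hzb v hvx hvz hde hdf
  · simp only [cRaw]
    rw [if_neg hde, if_neg hdf]
    have h1 := i.isLt
    have h2 := j.isLt
    have h3 : i.val ≠ j.val := fun h => hij (Fin.ext h)
    have h4 := bit_lt (x i + 1)
    have h5 := bit_lt (x i)
    have h6 := bit_lt (z j + 1)
    have h7 := bit_lt (z j)
    split_ifs <;> omega

lemma cRaw_lt (k : ℕ) (e : GridEdge n) : cRaw k e < 2*n+1 := by
  obtain ⟨x, i⟩ := e
  have h1 := i.isLt
  have h2 := bit_lt (x i + 1)
  have h3 := bit_lt (x i)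
  have h5 := (host k x i).isLt
  have h6 := bit_lt (x (host k x i) + 1)
  simp only [cRaw]
  unfold defCol
  split_ifs <;> omega

-- appended after crossNe / cRaw_lt inside namespace CubeColoring

lemma rightEnd_eq (x : Fin n → ℤ) (i : Fin n) :
    rightEnd ((x, i) : GridEdge n) = x + sing i := rfl

lemma inRect_iff {k : ℕ} (y : Fin n → ℤ) :
    inRect 0 (fun _ => 4*k+2) y ↔ ∀ l, 0 ≤ y l ∧ y l ≤ 4*(k:ℤ)+2 := by
  unfold inRect
  constructor <;> intro h l <;> have hh := h l <;>
    simp only [Pi.zero_apply, zero_add] at * <;> push_cast at hh ⊢ <;> exact hh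

lemma in_char {k : ℕ} (x : Fin n → ℤ) (i : Fin n) :
    edgeIn 0 (fun _ => 4*k+2) ((x, i) : GridEdge n) ↔
      ((∀ l, l ≠ i → 0 ≤ x l ∧ x l ≤ 4*(k:ℤ)+2) ∧ (0 ≤ x i ∧ x i + 1 ≤ 4*(k:ℤ)+2)) := by
  unfold edgeIn
  dsimp only
  rw [rightEnd_eq, inRect_iff, inRect_iff]
  constructor
  · rintro ⟨h1, h2⟩
    refine ⟨fun l hl => h1 l, (h1 i).1, ?_⟩
    have := (h2 i).2
    rw [add_single, if_pos rfl] at this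
    exact this
  · rintro ⟨h1, h2, h3⟩
    constructor
    · intro l
      by_cases hl : l = i
      · subst hl; exact ⟨h2, by omega⟩
      · exact h1 l hl
    · intro l
      rw [add_single]
      by_cases hl : l = i
      · subst hl; rw [if_pos rfl]; omega
      · rw [if_neg hl]; have := h1 l hl; omega

lemma adj_char {k : ℕ} (x : Fin n → ℤ) (i : Fin n) :
    edgeAdj 0 (fun _ => 4*k+2) ((x, i) : GridEdge n) ↔
      ((∀ l, l ≠ i → 0 ≤ x l ∧ x l ≤ 4*(k:ℤ)+2) ∧ (x i = -1 ∨ x i = 4*(k:ℤ)+2)) := by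
  unfold edgeAdj
  dsimp only
  rw [in_char, rightEnd_eq, inRect_iff, inRect_iff]
  constructor
  · rintro ⟨hN, hA | hB⟩
    · refine ⟨fun l hl => hA l, ?_⟩
      by_contra hcon
      push_neg at hcon
      have hAi := hA i
      exact hN ⟨fun l hl => hA l, hAi.1, by omega⟩
    · have hoff : ∀ l, l ≠ i → 0 ≤ x l ∧ x l ≤ 4*(k:ℤ)+2 := by
        intro l hl
        have := hB l
        rw [add_single, if_neg hl] at this
        omega
      refine ⟨hoff, ?_⟩
      have hBi := hB i
      rw [add_single, if_pos rfl] at hBi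
      by_contra hcon
      push_neg at hcon
      exact hN ⟨hoff, by omega, by omega⟩
  · rintro ⟨h1, h2 | h2⟩
    · refine ⟨fun hIn => by have := hIn.2.1; omega, Or.inr ?_⟩
      intro l
      rw [add_single]
      by_cases hl : l = i
      · subst hl; rw [if_pos rfl]; omega
      · rw [if_neg hl]; have := h1 l hl; omega
    · refine ⟨fun hIn => by have := hIn.2.2; omega, Or.inl ?_⟩
      intro l
      by_cases hl : l = i
      · subst hl; omega
      · exact h1 l hl

lemma reg_char {k : ℕ} (x : Fin n → ℤ) (i : Fin n) :
    (edgeIn 0 (fun _ => 4*k+2) ((x, i) : GridEdge n) ∨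
      edgeAdj 0 (fun _ => 4*k+2) ((x, i) : GridEdge n)) ↔
      ((∀ l, l ≠ i → 0 ≤ x l ∧ x l ≤ 4*(k:ℤ)+2) ∧ (-1 ≤ x i ∧ x i ≤ 4*(k:ℤ)+2)) := by
  rw [in_char, adj_char]
  constructor
  · rintro (⟨h1, h2⟩ | ⟨h1, h2⟩) <;> exact ⟨h1, by omega⟩
  · rintro ⟨h1, h2⟩
    by_cases h : 0 ≤ x i ∧ x i + 1 ≤ 4*(k:ℤ)+2
    · exact Or.inl ⟨h1, h⟩
    · exact Or.inr ⟨h1, by omega⟩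

lemma cRaw_bdry (k : ℕ) (x : Fin n → ℤ) (i : Fin n)
    (hb : ∀ l, l ≠ i → 0 ≤ x l ∧ x l ≤ 4*(k:ℤ)+2)
    (h : x i = -1 ∨ x i = 4*(k:ℤ)+2) :
    cRaw k ((x, i) : GridEdge n) = 2*i.val := by
  have hrange : 0 ≤ pos k x i ∧ pos k x i + 1 ≤ 4*(k:ℤ)+2 := by
    by_cases hq : qm k x i = ⊤
    · unfold pos; rw [hq, WithTop.untopD_top]; omega
    · obtain ⟨q, hq'⟩ := WithTop.ne_top_iff_exists.mp hq
      obtain ⟨h1, h2, _, _⟩ := p_spec hq'.symm hb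
      unfold pos; rw [← hq', WithTop.untopD_coe]; exact ⟨h1, h2⟩
  simp only [cRaw]
  rcases h with h | h
  · rw [if_neg (by omega), if_pos (by omega), h]
    have hb0 : bit ((-1 : ℤ) + 1) = 0 := by unfold bit; omega
    rw [hb0]
    omega
  · rw [if_neg (by omega), if_neg (by omega), h]
    have hb0 : bit (4*(k:ℤ)+2) = 0 := by unfold bit; omega
    rw [hb0]
    omega

lemma cRaw_top (k : ℕ) (x : Fin n → ℤ) (i : Fin n)
    (h : cRaw k ((x, i) : GridEdge n) = 2*n) :
    qm k x i = ⊤ ∧ x i = 2*(k:ℤ) := by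
  have h1 := i.isLt
  have h2 := bit_lt (x i + 1)
  have h3 := bit_lt (x i)
  have h5 := (host k x i).isLt
  have h6 := bit_lt (x (host k x i) + 1)
  simp only [cRaw] at h
  unfold defCol at h
  split_ifs at h with ha hb
  · refine ⟨hb, ?_⟩
    rw [ha]
    unfold pos
    rw [hb, WithTop.untopD_top]
  · omega
  · omega
  · omega

end CubeColoring

/-- Let `d = 4k+2`. For the cube `R = [0,d]^n` there is a proper edge `(2n+1)`-coloring of
the edges in and adjacent to `R` such that (1) for each `i` all edges adjacent to `R`
parallel to `e_i` have the same color `c_i`, and (2) the `(2n+1)`-st color is only used on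
edges of the core `K = [d/2-1, d/2+1]^n = [2k, 2k+2]^n` of `R`. -/
theorem cube_core_coloring (n k : ℕ) (hn : 1 ≤ n) :
    ∃ (c : GridEdge n → Fin (2 * n + 1)) (col : Fin n → Fin (2 * n + 1)),
      (∀ e f : GridEdge n,
        (edgeIn 0 (fun _ => 4 * k + 2) e ∨ edgeAdj 0 (fun _ => 4 * k + 2) e) →
        (edgeIn 0 (fun _ => 4 * k + 2) f ∨ edgeAdj 0 (fun _ => 4 * k + 2) f) →
        e ≠ f → sharesVertex e f → c e ≠ c f) ∧
      (∀ e : GridEdge n, edgeAdj 0 (fun _ => 4 * k + 2) e → c e = col e.2) ∧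
      (∀ e : GridEdge n,
        (edgeIn 0 (fun _ => 4 * k + 2) e ∨ edgeAdj 0 (fun _ => 4 * k + 2) e) →
        c e = ⟨2 * n, by omega⟩ →
        edgeIn (fun _ => (2 * k : ℤ)) (fun _ => 2) e) := by
  refine ⟨fun e => ⟨CubeColoring.cRaw k e, CubeColoring.cRaw_lt k e⟩,
    fun i => ⟨2*i.val, by have := i.isLt; omega⟩, ?_, ?_, ?_⟩
  · -- properness
    rintro ⟨x, i⟩ ⟨z, j⟩ he hf hne hsv hcc
    have hcc' : CubeColoring.cRaw k ((x, i) : GridEdge n) =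
        CubeColoring.cRaw k ((z, j) : GridEdge n) := congrArg Fin.val hcc
    rw [CubeColoring.reg_char] at he hf
    by_cases hij : i = j
    · subst hij
      rcases hsv with h | h | h | h
      · exact hne (by rw [show x = z from h])
      · have h' : x = z + CubeColoring.sing i := h
        rw [h'] at hcc'
        exact CubeColoring.sameNe k z i hcc'.symm
      · have h' : x + CubeColoring.sing i = z := h
        rw [← h'] at hcc'
        exact CubeColoring.sameNe k x i hcc'
      · have h' : x + CubeColoring.sing i = z + CubeColoring.sing i := h
        have hxz : x = z := by
          funext l
          have := congrFun h' l
          simp only [Pi.add_apply] at this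
          omega
        exact hne (by rw [hxz])
    · obtain ⟨v, hvx, hvz⟩ : ∃ v, (v = x ∨ v = x + CubeColoring.sing i) ∧
          (v = z ∨ v = z + CubeColoring.sing j) := by
        rcases hsv with h | h | h | h
        · exact ⟨x, Or.inl rfl, Or.inl h⟩
        · exact ⟨x, Or.inl rfl, Or.inr h⟩
        · exact ⟨z, Or.inr h.symm, Or.inl rfl⟩
        · exact ⟨x + CubeColoring.sing i, Or.inr rfl, Or.inr h⟩
      exact CubeColoring.crossNe k x z i j hij he.1 hf.1 v hvx hvz hcc'
  · -- boundary colors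
    rintro ⟨x, i⟩ hadj
    rw [CubeColoring.adj_char] at hadj
    exact Fin.ext (CubeColoring.cRaw_bdry k x i hadj.1 hadj.2)
  · -- the special color appears only on core edges
    rintro ⟨x, i⟩ hreg hc
    have hval : CubeColoring.cRaw k ((x, i) : GridEdge n) = 2*n := congrArg Fin.val hc
    obtain ⟨hq, hxi⟩ := CubeColoring.cRaw_top k x i hval
    have hstar := CubeColoring.star_coords hq
    refine ⟨fun l => ?_, fun l => ?_⟩
    · dsimp only
      by_cases hl : l = i
      · subst hl; rw [hxi]; push_cast; omega
      · rw [hstar l hl]; push_cast; omega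
    · rw [show rightEnd ((x, i) : GridEdge n) = x + CubeColoring.sing i from rfl]
      dsimp only
      rw [CubeColoring.add_single]
      by_cases hl : l = i
      · subst hl; rw [if_pos rfl, hxi]; push_cast; omega
      · rw [if_neg hl, hstar l hl]; push_cast; omega
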